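/- Let D be a noncommutative division ring and K a maximal subfield of D. Then the normalizer N_{D*}(K*) is a proper subset of D*. -/
import Mathlib


/-- If `D` is a noncommutative division ring and `K` a maximal subfield of `D`, then the
normalizer of `K*` in `D*` is a proper subset of `D*`: there is a nonzero `d` not
normalizing `K`. -/
theorem stmt5 {D : Type*} [DivisionRing D] (hnc : ∃ a b : D, a * b ≠ b * a)
    (K : Subfield D)
    (hcomm : ∀ x ∈ K, ∀ y ∈ K, x * y = y * x)
    (hmax : ∀ d : D, (∀ x ∈ K, d * x = x * d) → d ∈ K) :
    ∃ d : D, d ≠ 0 ∧ ¬(∀ k ∈ K, d * k * d⁻¹ ∈ K) := by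
  by_contra hcon
  push_neg at hcon
  -- hcon : ∀ d, d ≠ 0 → ∀ k ∈ K, d * k * d⁻¹ ∈ K
  have hall : ∀ b : D, b ∈ K := by
    intro b
    by_contra hb
    have hb0 : b ≠ 0 := fun h => hb (h ▸ K.zero_mem)
    apply hb
    apply hmax
    intro a ha
    have hb1 : (1 : D) + b ≠ 0 := by
      intro h
      apply hb
      have hbeq : b = -1 := by
        have := eq_neg_of_add_eq_zero_right h
        simpa using this
      rw [hbeq]
      exact K.neg_mem K.one_mem
    have ha1 : b * a * b⁻¹ ∈ K := hcon b hb0 a ha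
    have ha2 : (1 + b) * a * (1 + b)⁻¹ ∈ K := hcon _ hb1 a ha
    set a₁ := b * a * b⁻¹ with ha₁def
    set a₂ := (1 + b) * a * (1 + b)⁻¹ with ha₂def
    have e1 : a₁ * b = b * a := by
      rw [ha₁def, mul_assoc, inv_mul_cancel₀ hb0, mul_one]
    have e2 : a₂ * (1 + b) = (1 + b) * a := by
      rw [ha₂def, mul_assoc, inv_mul_cancel₀ hb1, mul_one]
    -- expand e2 : a₂ + a₂ * b = a + b * a
    have e3 : a₂ + a₂ * b = a + a₁ * b := by
      rw [e1]
      calc a₂ + a₂ * b = a₂ * (1 + b) := by noncomm_ring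
        _ = (1 + b) * a := e2
        _ = a + b * a := by noncomm_ring
    by_cases hcase : a₁ = a₂
    · -- then a₂ = a and b commutes with a
      have haa : a₂ = a := by
        have : a₂ + a₂ * b = a + a₂ * b := by rw [e3, hcase]
        exact add_right_cancel this
      calc b * a = a₁ * b := e1.symm
        _ = a * b := by rw [hcase, haa]
    · exfalso
      have hne : a₁ - a₂ ≠ 0 := sub_ne_zero.mpr hcase
      have hbeq : b = (a₁ - a₂)⁻¹ * (a₂ - a) := by
        have h4 : (a₁ - a₂) * b = a₂ - a := by
          rw [sub_mul, sub_eq_sub_iff_add_eq_add, add_comm (a₁ * b) a]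
          exact e3.symm
        rw [← h4, ← mul_assoc, inv_mul_cancel₀ hne, one_mul]
      exact hb (hbeq ▸ K.mul_mem (K.inv_mem (K.sub_mem ha1 ha2)) (K.sub_mem ha2 ha))
  obtain ⟨x, y, hxy⟩ := hnc
  exact hxy (hcomm x (hall x) y (hall y))
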